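/- Let Γ ⊆ (0, ∞) be a set satisfying the descending chain condition and let c > 0. Then the set of elements γ ∈ Γ such that there exists a finite sequence γ_1, …, γ_k of elements of Γ with γ_1 = γ and γ_1 + γ_2 + ⋯ + γ_k = c, is finite. -/

import Mathlib

open Pointwise

/-- Sets of sums of exactly `k` elements of `Γ`. -/
def sumSets (Γ : Set ℝ) : ℕ → Set ℝ
  | 0 => {0}
  | k + 1 => Γ + sumSets Γ k

lemma sumSets_isWF {Γ : Set ℝ} (hΓ : Γ.IsWF) : ∀ k, (sumSets Γ k).IsWF
  | 0 => Set.isWF_singleton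
  | k + 1 => hΓ.add (sumSets_isWF hΓ k)

lemma list_sum_mem_sumSets {Γ : Set ℝ} :
    ∀ l : List ℝ, (∀ x ∈ l, x ∈ Γ) → l.sum ∈ sumSets Γ l.length
  | [], _ => by simp [sumSets]
  | a :: l, h => by
    have ha : a ∈ Γ := h a (by simp)
    have hl : l.sum ∈ sumSets Γ l.length :=
      list_sum_mem_sumSets l (fun x hx => h x (by simp [hx]))
    simpa [sumSets] using Set.add_mem_add ha hl

/-- Sets of sums of at most `k` elements of `Γ`. -/
def sumSetsLe (Γ : Set ℝ) : ℕ → Set ℝ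
  | 0 => {0}
  | k + 1 => sumSetsLe Γ k ∪ sumSets Γ (k + 1)

lemma sumSetsLe_isWF {Γ : Set ℝ} (hΓ : Γ.IsWF) : ∀ k, (sumSetsLe Γ k).IsWF
  | 0 => Set.isWF_singleton
  | k + 1 => (sumSetsLe_isWF hΓ k).union (sumSets_isWF hΓ (k + 1))

lemma sumSets_subset_sumSetsLe {Γ : Set ℝ} : ∀ {j k : ℕ}, j ≤ k →
    sumSets Γ j ⊆ sumSetsLe Γ k := by
  intro j k
  induction k with
  | zero => intro h; interval_cases j; simp [sumSets, sumSetsLe]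
  | succ k ih =>
    intro h
    rcases Nat.lt_or_ge j (k + 1) with h' | h'
    · exact (ih (Nat.lt_succ_iff.mp h')).trans (Set.subset_union_left)
    · have : j = k + 1 := le_antisymm h h'
      subst this
      exact Set.subset_union_right

lemma length_nsmul_le_sum {m : ℝ} : ∀ l : List ℝ, (∀ x ∈ l, m ≤ x) →
    (l.length : ℝ) * m ≤ l.sum
  | [], _ => by simp
  | a :: l, h => by
    have h1 : m ≤ a := h a (by simp)
    have h2 : (l.length : ℝ) * m ≤ l.sum :=
      length_nsmul_le_sum l (fun x hx => h x (by simp [hx]))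
    simp only [List.length_cons, List.sum_cons, Nat.cast_add, Nat.cast_one]
    nlinarith

/-- For a DCC set Γ ⊆ (0,∞) and c > 0, only finitely many elements of Γ occur as
the first term of a finite sequence of elements of Γ summing to c. -/
theorem finite_first_terms (Γ : Set ℝ) (hΓpos : Γ ⊆ Set.Ioi 0)
    (hΓ : ¬ ∃ f : ℕ → ℝ, (∀ n, f n ∈ Γ) ∧ StrictAnti f)
    (c : ℝ) (hc : 0 < c) :
    {γ : ℝ | γ ∈ Γ ∧ ∃ l : List ℝ, (∀ x ∈ l, x ∈ Γ) ∧
      l.head? = some γ ∧ l.sum = c}.Finite := by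
  set S := {γ : ℝ | γ ∈ Γ ∧ ∃ l : List ℝ, (∀ x ∈ l, x ∈ Γ) ∧
      l.head? = some γ ∧ l.sum = c} with hS
  have hWF : Γ.IsWF := by
    rw [Set.isWF_iff_no_descending_seq]
    intro f hf hmem
    exact hΓ ⟨f, fun n => hmem n, hf⟩
  by_cases hne : Γ.Nonempty
  swap
  · have : S = ∅ := by
      ext γ; simp only [hS, Set.mem_setOf_eq, Set.mem_empty_iff_false, iff_false]
      rintro ⟨hγ, -⟩
      exact hne ⟨γ, hγ⟩
    rw [this]; exact Set.finite_empty
  set m := hWF.min hne with hm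
  have hmΓ : m ∈ Γ := hWF.min_mem hne
  have hmpos : 0 < m := hΓpos hmΓ
  set K := ⌈c / m⌉₊ with hK
  -- every element of S has c - γ in sumSetsLe Γ K
  have key : ∀ γ ∈ S, c - γ ∈ sumSetsLe Γ K := by
    rintro γ ⟨hγΓ, l, hlΓ, hhead, hsum⟩
    match l, hhead with
    | a :: rest, hhead =>
      have ha : a = γ := by simpa using hhead
      subst ha
      have hrestΓ : ∀ x ∈ rest, x ∈ Γ := fun x hx => hlΓ x (by simp [hx])
      have hrest_sum : rest.sum = c - a := by
        simp only [List.sum_cons] at hsum; linarith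
      have hlen : rest.length ≤ K := by
        have h1 : (rest.length : ℝ) * m ≤ rest.sum :=
          length_nsmul_le_sum rest (fun x hx => hWF.min_le hne (hrestΓ x hx))
        have h2 : rest.sum ≤ c := by
          have := hΓpos hγΓ
          rw [hrest_sum]
          simp only [Set.mem_Ioi] at this
          linarith
        have h3 : (rest.length : ℝ) ≤ c / m := by
          rw [le_div_iff₀ hmpos]; linarith
        calc rest.length ≤ ⌈(rest.length : ℝ)⌉₊ := by simp
          _ ≤ K := Nat.ceil_le_ceil h3
      have := list_sum_mem_sumSets rest hrestΓ
      rw [hrest_sum] at this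
      exact sumSets_subset_sumSetsLe hlen this
  -- now prove finiteness
  by_contra hinf
  have hSinf : S.Infinite := hinf
  set F : ℕ → ℝ := fun n => (hSinf.natEmbedding S n : ℝ) with hF
  have hFmem : ∀ n, F n ∈ S := fun n => (hSinf.natEmbedding S n).2
  have hFinj : Function.Injective F := fun a b hab => by
    have := (hSinf.natEmbedding S).injective (Subtype.ext hab)
    exact this
  have hSsub : S ⊆ Γ := fun γ hγ => hγ.1
  have hSPWO : S.IsPWO := (Set.isPWO_iff_isWF.mpr (hWF.mono hSsub))
  obtain ⟨g, hg⟩ := hSPWO.exists_monotone_subseq (f := F) hFmem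
  have hmono : StrictMono (F ∘ g) :=
    hg.strictMono_of_injective (hFinj.comp g.injective)
  have hanti : StrictAnti (fun n => c - F (g n)) := by
    intro a b hab
    simp only
    have := hmono hab
    simp only [Function.comp_apply] at this
    linarith
  have hWFT := sumSetsLe_isWF hWF K
  rw [Set.isWF_iff_no_descending_seq] at hWFT
  exact hWFT _ hanti (fun n => key _ (hFmem (g n)))
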